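/- Let ω = (ω₁,...,ωₙ) ∈ ℝⁿ. Define ω to be of type (+) if all ωᵢ have the same (strict) sign, type (-) if there exist i, j with ωᵢ < 0 < ωⱼ, and type (0) otherwise. Then for ω of type (+) or type (-), the closure Ω_{i} of the semigroup generated by ω₁,...,ωₙ, -ωᵢ equals the closed subgroup of ℝ generated by ω₁,...,ωₙ, for every i ∈ {1,...,n}. -/
import Mathlib


noncomputable def OmegaI {Γ : Type*} [TopologicalSpace Γ] [AddCommGroup Γ] {n : ℕ}
    (ω : Fin n → Γ) (I : Set (Fin n)) : Set Γ :=
  closure (AddSubsemigroup.closure (Set.range ω ∪ (fun i => -ω i) '' I) : Set Γ)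

/-- `ω` is of type (+): all the `ωᵢ` have the same strict sign. -/
def TypePlus {n : ℕ} (ω : Fin n → ℝ) : Prop :=
  (∀ i, 0 < ω i) ∨ (∀ i, ω i < 0)

/-- `ω` is of type (-): there are `i, j` with `ωᵢ < 0 < ωⱼ`. -/
def TypeMinus {n : ℕ} (ω : Fin n → ℝ) : Prop :=
  ∃ i j, ω i < 0 ∧ 0 < ω j


lemma key_approx (a c : ℝ) (ha : 0 < a) (hc : 0 < c) {ε : ℝ} (hε : 0 < ε) :
    ∃ p m : ℕ, 0 < p ∧ 0 < m ∧ |(p : ℝ) * a - (m : ℝ) * c| < ε := by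
  set δ := min ε a with hδdef
  have hδ : 0 < δ := lt_min hε ha
  set mf : ℕ → ℤ := fun p => ⌊(p : ℝ) * a / c⌋ with hmf
  set r : ℕ → ℝ := fun p => (p : ℝ) * a - (mf p : ℝ) * c with hr
  have hfr : ∀ p, r p = c * Int.fract ((p : ℝ) * a / c) := by
    intro p
    rw [hr, Int.fract]
    field_simp
    ring
  have hr0 : ∀ p, 0 ≤ r p := fun p => by
    rw [hfr]; exact mul_nonneg hc.le (Int.fract_nonneg _)
  have hrc : ∀ p, r p < c := fun p => by
    rw [hfr]
    calc c * Int.fract ((p : ℝ) * a / c) < c * 1 :=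
          (mul_lt_mul_iff_right₀ hc).2 (Int.fract_lt_one _)
      _ = c := mul_one c
  set K : ℕ := ⌈c / δ⌉₊ with hK
  set f : ℕ → ℕ := fun p => ⌊r p / δ⌋₊ with hf
  have hmaps : ∀ p ∈ Finset.range (K + 1), f p ∈ Finset.range K := by
    intro p _
    rw [Finset.mem_range, hf]
    have h1 : r p / δ < (K : ℝ) := by
      calc r p / δ < c / δ := by gcongr; exact hrc p
        _ ≤ (K : ℝ) := Nat.le_ceil _
    exact (Nat.floor_lt (div_nonneg (hr0 p) hδ.le)).2 h1
  have hcard : (Finset.range K).card < (Finset.range (K + 1)).card := by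
    simp
  obtain ⟨p, hp, q, hq, hpq, hfpq⟩ :=
    Finset.exists_ne_map_eq_of_card_lt_of_maps_to hcard hmaps
  -- wlog q < p
  have main : ∀ p q : ℕ, q < p → f p = f q →
      ∃ p m : ℕ, 0 < p ∧ 0 < m ∧ |(p : ℝ) * a - (m : ℝ) * c| < ε := by
    intro p q hqp hfeq
    have hdiff : |r p - r q| < δ := by
      have hfeq' : ⌊r p / δ⌋₊ = ⌊r q / δ⌋₊ := hfeq
      set j : ℕ := ⌊r q / δ⌋₊ with hj
      have h1 : (j : ℝ) ≤ r p / δ := by rw [← hfeq']; exact Nat.floor_le (div_nonneg (hr0 p) hδ.le)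
      have h2 : r p / δ < j + 1 := by rw [← hfeq']; exact Nat.lt_floor_add_one _
      have h3 : (j : ℝ) ≤ r q / δ := Nat.floor_le (div_nonneg (hr0 q) hδ.le)
      have h4 : r q / δ < j + 1 := Nat.lt_floor_add_one _
      have b1 : (j : ℝ) * δ ≤ r p := (le_div_iff₀ hδ).1 h1
      have b2 : r p < ((j : ℝ) + 1) * δ := (div_lt_iff₀ hδ).1 h2
      have b3 : (j : ℝ) * δ ≤ r q := (le_div_iff₀ hδ).1 h3
      have b4 : r q < ((j : ℝ) + 1) * δ := (div_lt_iff₀ hδ).1 h4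
      rw [abs_sub_lt_iff]
      constructor <;> nlinarith
    set u : ℕ := p - q with hu
    have hu0 : 0 < u := Nat.sub_pos_of_lt hqp
    have hucast : (u : ℝ) = (p : ℝ) - q := by
      rw [hu]; push_cast [Nat.cast_sub hqp.le]; ring
    set v : ℤ := mf p - mf q with hv
    have hrpq : r p - r q = (u : ℝ) * a - (v : ℝ) * c := by
      rw [hr, hv, hucast]; push_cast; ring
    have hva : (v : ℝ) * c > a - δ := by
      have h1 : (1 : ℝ) ≤ (u : ℝ) := by exact_mod_cast hu0
      have h2 : r p - r q < δ := (abs_lt.1 hdiff).2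
      nlinarith
    have hv0 : 0 < v := by
      have : (0 : ℝ) < (v : ℝ) * c := by
        have : δ ≤ a := min_le_right _ _
        linarith
      have h2 : (0 : ℝ) < (v : ℝ) := by nlinarith
      exact_mod_cast h2
    refine ⟨u, v.toNat, hu0, by omega, ?_⟩
    have hvt : ((v.toNat : ℕ) : ℝ) = (v : ℝ) := by
      exact_mod_cast Int.toNat_of_nonneg hv0.le
    rw [hvt, ← hrpq]
    exact hdiff.trans_le (min_le_left _ _)
  rcases hpq.lt_or_gt with h | h
  · exact main q p h hfpq.symm
  · exact main p q h hfpq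



lemma nsmul_mem_semi (S : AddSubsemigroup ℝ) {x : ℝ} (hx : x ∈ S) :
    ∀ n : ℕ, 0 < n → n • x ∈ S := by
  intro n hn
  induction n with
  | zero => omega
  | succ k ih =>
    rcases Nat.eq_zero_or_pos k with hk | hk
    · subst hk; simpa using hx
    · rw [succ_nsmul]
      exact S.add_mem (ih hk) hx

lemma near_pair (a b : ℝ) (ha : 0 < a) (hb : b < 0) (x : ℝ)
    (hx : x = -a ∨ x = -b ∨ x = 0) :
    x ∈ closure (AddSubsemigroup.closure {a, b} : Set ℝ) := by
  have haS : a ∈ AddSubsemigroup.closure ({a, b} : Set ℝ) :=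
    AddSubsemigroup.subset_closure (by simp)
  have hbS : b ∈ AddSubsemigroup.closure ({a, b} : Set ℝ) :=
    AddSubsemigroup.subset_closure (by simp)
  have hmem : ∀ p m : ℕ, 0 < p → 0 < m →
      (p : ℝ) * a + (m : ℝ) * b ∈ (AddSubsemigroup.closure ({a, b} : Set ℝ) : Set ℝ) := by
    intro p m hp hm
    have := (AddSubsemigroup.closure ({a, b} : Set ℝ)).add_mem
      (nsmul_mem_semi _ haS p hp) (nsmul_mem_semi _ hbS m hm)
    simpa [nsmul_eq_mul] using this
  rw [Metric.mem_closure_iff]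
  intro ε hε
  have hc : 0 < -b := by linarith
  rcases hx with rfl | rfl | rfl
  · obtain ⟨p, m, hp, hm, hpm⟩ := key_approx (2 * a) (-b) (by linarith) hc hε
    refine ⟨((2 * p - 1 : ℕ) : ℝ) * a + (m : ℝ) * b, hmem _ _ (by omega) hm, ?_⟩
    rw [Real.dist_eq]
    have hcast : ((2 * p - 1 : ℕ) : ℝ) = 2 * (p : ℝ) - 1 := by
      push_cast [Nat.cast_sub (by omega : 1 ≤ 2 * p)]; ring
    rw [hcast]
    calc |(-a) - ((2 * (p:ℝ) - 1) * a + (m : ℝ) * b)|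
        = |(p : ℝ) * (2 * a) - (m : ℝ) * (-b)| := by rw [← abs_neg]; ring_nf
      _ < ε := hpm
  · obtain ⟨p, m, hp, hm, hpm⟩ := key_approx a (2 * (-b)) ha (by linarith) hε
    refine ⟨((p : ℕ) : ℝ) * a + ((2 * m - 1 : ℕ) : ℝ) * b, hmem _ _ hp (by omega), ?_⟩
    rw [Real.dist_eq]
    have hcast : ((2 * m - 1 : ℕ) : ℝ) = 2 * (m : ℝ) - 1 := by
      push_cast [Nat.cast_sub (by omega : 1 ≤ 2 * m)]; ring
    rw [hcast]
    calc |(-b) - ((p : ℝ) * a + (2 * (m:ℝ) - 1) * b)|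
        = |(p : ℝ) * a - (m : ℝ) * (2 * (-b))| := by rw [← abs_neg]; ring_nf
      _ < ε := hpm
  · obtain ⟨p, m, hp, hm, hpm⟩ := key_approx a (-b) ha hc hε
    refine ⟨(p : ℝ) * a + (m : ℝ) * b, hmem _ _ hp hm, ?_⟩
    rw [Real.dist_eq]
    calc |0 - ((p : ℝ) * a + (m : ℝ) * b)|
        = |(p : ℝ) * a - (m : ℝ) * (-b)| := by rw [← abs_neg]; ring_nf
      _ < ε := hpm

lemma near_in (gens : Set ℝ) (a b : ℝ) (ha : 0 < a) (hb : b < 0)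
    (hag : a ∈ gens) (hbg : b ∈ gens) (x : ℝ) (hx : x = -a ∨ x = -b ∨ x = 0) :
    x ∈ closure (AddSubsemigroup.closure gens : Set ℝ) := by
  refine closure_mono ?_ (near_pair a b ha hb x hx)
  exact SetLike.coe_mono (AddSubsemigroup.closure_mono (by
    intro y hy; rcases hy with rfl | hy
    · exact hag
    · simp at hy; subst hy; exact hbg))

theorem stmt18 {n : ℕ} (hn : 2 ≤ n) (ω : Fin n → ℝ)
    (h : TypePlus ω ∨ TypeMinus ω) :
    ∀ i : Fin n, OmegaI ω {i} = closure (AddSubgroup.closure (Set.range ω) : Set ℝ) := by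
  intro i
  set gens : Set ℝ := Set.range ω ∪ (fun i => -ω i) '' {i} with hgens
  have hωg : ∀ l, ω l ∈ gens := fun l => Or.inl ⟨l, rfl⟩
  have hng : -ω i ∈ gens := Or.inr ⟨i, Set.mem_singleton i, rfl⟩
  set T : Set ℝ := closure (AddSubsemigroup.closure gens : Set ℝ) with hT
  -- key membership facts
  have hzero : (0 : ℝ) ∈ T ∧ ∀ l, -ω l ∈ T := by
    rcases h with (hp | hp) | ⟨j, k, hj, hk⟩
    · have hi : 0 < ω i := hp i
      constructor
      · exact near_in gens (ω i) (-ω i) hi (by linarith) (hωg i) hng 0 (by tauto)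
      · intro l
        exact near_in gens (ω l) (-ω i) (hp l) (by linarith) (hωg l) hng _ (by tauto)
    · have hi : ω i < 0 := hp i
      constructor
      · exact near_in gens (-ω i) (ω i) (by linarith) hi hng (hωg i) 0 (by tauto)
      · intro l
        exact near_in gens (-ω i) (ω l) (by linarith) (hp l) hng (hωg l) _ (by tauto)
    · constructor
      · exact near_in gens (ω k) (ω j) hk hj (hωg k) (hωg j) 0 (by tauto)
      · intro l
        rcases lt_trichotomy (ω l) 0 with hl | hl | hl
        · exact near_in gens (ω k) (ω l) hk hl (hωg k) (hωg l) _ (Or.inr (Or.inl rfl))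
        · rw [hl, neg_zero]
          exact near_in gens (ω k) (ω j) hk hj (hωg k) (hωg j) 0 (by tauto)
        · exact near_in gens (ω l) (ω j) hl hj (hωg l) (hωg j) _ (Or.inl rfl)
  apply subset_antisymm
  · -- easy direction
    apply closure_mono
    intro x hx
    have : AddSubsemigroup.closure gens ≤
        (AddSubgroup.closure (Set.range ω)).toAddSubmonoid.toAddSubsemigroup := by
      rw [AddSubsemigroup.closure_le]
      rintro y (hy | ⟨l, hl, rfl⟩)
      · exact AddSubgroup.subset_closure hy
      · exact (neg_mem (AddSubgroup.subset_closure ⟨l, rfl⟩) :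
          -ω l ∈ AddSubgroup.closure (Set.range ω))
    exact this hx
  · -- hard direction
    show closure (AddSubgroup.closure (Set.range ω) : Set ℝ) ⊆ T
    have hTclosed : IsClosed T := isClosed_closure
    rw [← hTclosed.closure_eq]
    apply closure_mono
    -- build submonoid with carrier T
    set M : AddSubmonoid ℝ :=
      { carrier := T
        zero_mem' := hzero.1
        add_mem' := fun {x y} hx hy =>
          ((AddSubsemigroup.closure gens).topologicalClosure).add_mem hx hy } with hM
    intro x hx
    have hx' : x ∈ (AddSubgroup.closure (Set.range ω)).toAddSubmonoid := hx
    rw [AddSubgroup.closure_toAddSubmonoid] at hx'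
    have hsub : Set.range ω ∪ -Set.range ω ⊆ (M : Set ℝ) := by
      rintro y (⟨l, rfl⟩ | hy)
      · exact subset_closure (AddSubsemigroup.subset_closure (hωg l))
      · rw [Set.mem_neg] at hy
        obtain ⟨l, hl⟩ := hy
        have hy' : y = -ω l := by rw [hl]; ring
        rw [hy']
        exact hzero.2 l
    exact (AddSubmonoid.closure_le.2 hsub) hx'
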